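/- Let G be a group and K a subgroup such that for every g ∈ G the double coset KgK is a finite disjoint union of left cosets of K. Let π be a ℂ-linear representation of G on a complex vector space V such that every G-invariant subspace of V has a G-invariant complement. Let v₀ ∈ V be a nonzero vector such that: (i) v₀ is fixed by every element of K; (ii) the vectors π(g)v₀, g ∈ G, span V; (iii) for every g ∈ G, writing KgK as a disjoint union of left cosets g₁K, …, g_nK, the vector Σ_{i=1}^n π(g_i)v₀ is a scalar multiple of v₀. Then π is irreducible, i.e., the only G-invariant subspaces of V are 0 and V. -/

import Mathlib

/-- The double coset `KgK` of `g` with respect to a subgroup `K`. -/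
def doubleCoset {G : Type*} [Group G] (K : Subgroup G) (g : G) : Set G :=
  {x : G | ∃ k₁ ∈ K, ∃ k₂ ∈ K, x = k₁ * g * k₂}

/-- The left translate `aS` of a set `S` by a group element `a`. -/
def leftTranslate {G : Type*} [Group G] (a : G) (S : Set G) : Set G :=
  {x : G | ∃ s ∈ S, x = a * s}

section Aux

variable {G V : Type*} [Group G] [AddCommGroup V] [Module ℂ V]

def cosetStab (K : Subgroup G) (x : G) : Subgroup ↥K where
  carrier := {k | x⁻¹ * (k : G) * x ∈ K}
  one_mem' := by simpa using K.one_mem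
  mul_mem' := by
    intro a b ha hb
    simp only [Set.mem_setOf_eq] at *
    have h := K.mul_mem ha hb
    have e : (x⁻¹ * (a : G) * x) * (x⁻¹ * (b : G) * x) = x⁻¹ * ((a : G) * (b : G)) * x := by
      group
    rw [e] at h
    simpa using h
  inv_mem' := by
    intro a ha
    simp only [Set.mem_setOf_eq] at *
    have h := K.inv_mem ha
    have e : (x⁻¹ * (a : G) * x)⁻¹ = x⁻¹ * (a : G)⁻¹ * x := by group
    rw [e] at h
    simpa using h

lemma mem_cosetStab_iff {K : Subgroup G} {x : G} {k : ↥K} :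
    k ∈ cosetStab K x ↔ x⁻¹ * (k : G) * x ∈ K := Iff.rfl

theorem avg_key (K : Subgroup G) (π : G →* (V ≃ₗ[ℂ] V)) (v₀ : V)
    (hdec : ∀ g : G, ∃ (n : ℕ) (r : Fin n → G),
      doubleCoset K g = ⋃ i, leftTranslate (r i) (K : Set G) ∧
      ∀ i j, i ≠ j →
        Disjoint (leftTranslate (r i) (K : Set G)) (leftTranslate (r j) (K : Set G)))
    (hfix : ∀ k ∈ K, π k v₀ = v₀)
    (heigen : ∀ (g : G) (n : ℕ) (r : Fin n → G),
      doubleCoset K g = ⋃ i, leftTranslate (r i) (K : Set G) →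
      (∀ i j, i ≠ j →
        Disjoint (leftTranslate (r i) (K : Set G)) (leftTranslate (r j) (K : Set G))) →
      ∃ c : ℂ, ∑ i, π (r i) v₀ = c • v₀)
    (s : Finset G) :
    ∃ N : ℕ, N ≠ 0 ∧ ∃ A : V →ₗ[ℂ] V,
      (∀ U : Submodule ℂ V, (∀ g : G, ∀ v ∈ U, π g v ∈ U) → ∀ v ∈ U, A v ∈ U) ∧
      A v₀ = (N : ℂ) • v₀ ∧
      ∀ x ∈ s, A (π x v₀) ∈ Submodule.span ℂ {v₀} := by
  classical
  choose n r hdec1 hdec2 using hdec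
  choose c hc using fun g => heigen g (n g) (r g) (hdec1 g) (hdec2 g)
  -- basic facts
  have coset_eq : ∀ g z : G, z ∈ leftTranslate g (K : Set G) → π z v₀ = π g v₀ := by
    rintro g z ⟨t, ht, rfl⟩
    rw [map_mul]
    show (π g) ((π t) v₀)  = _
    rw [hfix t ht]
  have uniq : ∀ (x : G) (i j : Fin (n x)) (z : G),
      z ∈ leftTranslate (r x i) (K : Set G) → z ∈ leftTranslate (r x j) (K : Set G) → i = j := by
    intro x i j z hi hj
    by_contra hij
    exact Set.disjoint_left.mp (hdec2 x i j hij) hi hj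
  have exi : ∀ (x : G) (k : ↥K), ∃ i, ((k : G) * x) ∈ leftTranslate (r x i) (K : Set G) := by
    intro x k
    have h : ((k : G) * x) ∈ doubleCoset K x := ⟨k, k.2, 1, K.one_mem, by rw [mul_one]⟩
    rw [hdec1 x] at h
    exact Set.mem_iUnion.mp h
  set ψ : ∀ x : G, ↥K → Fin (n x) := fun x k => Classical.choose (exi x k) with hψdef
  have hψ : ∀ (x : G) (k : ↥K), ((k : G) * x) ∈ leftTranslate (r x (ψ x k)) (K : Set G) :=
    fun x k => Classical.choose_spec (exi x k)
  have ψ_eq_of : ∀ (x : G) (k k' : ↥K), (k⁻¹ * k') ∈ cosetStab K x → ψ x k' = ψ x k := by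
    intro x k k' hmem
    rw [mem_cosetStab_iff] at hmem
    obtain ⟨t, ht, hte⟩ := hψ x k
    have : ((k' : G) * x) ∈ leftTranslate (r x (ψ x k)) (K : Set G) := by
      refine ⟨t * (x⁻¹ * ((k : G)⁻¹ * (k' : G)) * x), K.mul_mem ht (by simpa using hmem), ?_⟩
      rw [← mul_assoc, ← hte]
      group
    exact uniq x _ _ _ (hψ x k') this
  have stab_of_ψ_eq : ∀ (x : G) (k k' : ↥K), ψ x k = ψ x k' → (k⁻¹ * k') ∈ cosetStab K x := by
    intro x k k' he
    obtain ⟨t, ht, hte⟩ := hψ x k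
    obtain ⟨t', ht', hte'⟩ := hψ x k'
    rw [← he] at hte'
    rw [mem_cosetStab_iff]
    have : x⁻¹ * ((k⁻¹ * k' : ↥K) : G) * x = t⁻¹ * t' := by
      push_cast
      have h1 : (k : G) * x = r x (ψ x k) * t := hte
      have h2 : (k' : G) * x = r x (ψ x k) * t' := hte'
      calc x⁻¹ * ((k : G)⁻¹ * (k' : G)) * x
          = ((k : G) * x)⁻¹ * ((k' : G) * x) := by group
        _ = (r x (ψ x k) * t)⁻¹ * (r x (ψ x k) * t') := by rw [h1, h2]
        _ = t⁻¹ * t' := by group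
    rw [this]
    exact K.mul_mem (K.inv_mem ht) ht'
  have ψ_surj : ∀ (x : G) (i : Fin (n x)), ∃ k : ↥K, ψ x k = i := by
    intro x i
    have hri : r x i ∈ doubleCoset K x := by
      rw [hdec1 x]
      exact Set.mem_iUnion.mpr ⟨i, ⟨1, K.one_mem, (mul_one _).symm⟩⟩
    obtain ⟨k₁, hk₁, k₂, hk₂, hre⟩ := hri
    refine ⟨⟨k₁, hk₁⟩, ?_⟩
    have hmem : (k₁ : G) * x ∈ leftTranslate (r x i) (K : Set G) :=
      ⟨k₂⁻¹, K.inv_mem hk₂, by rw [hre]; group⟩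
    exact uniq x _ _ _ (hψ x ⟨k₁, hk₁⟩) hmem
  -- finite index of stabilizers
  have fin : ∀ x : G, (cosetStab K x).FiniteIndex := by
    intro x
    have hdes : ∀ a b : ↥K, QuotientGroup.leftRel (cosetStab K x) a b → ψ x a = ψ x b := by
      intro a b hab
      rw [QuotientGroup.leftRel_apply] at hab
      exact (ψ_eq_of x a b hab).symm
    have hinj : Function.Injective
        (fun q : ↥K ⧸ cosetStab K x => Quotient.liftOn' q (ψ x) hdes) := by
      intro q q'
      induction q using Quotient.inductionOn' with
      | h a =>
        induction q' using Quotient.inductionOn' with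
        | h b =>
          intro he
          simp only [Quotient.liftOn'_mk''] at he
          exact Quotient.sound' (QuotientGroup.leftRel_apply.mpr (stab_of_ψ_eq x a b he))
    have hfq : Finite (↥K ⧸ cosetStab K x) := Finite.of_injective _ hinj
    exact @Subgroup.finiteIndex_of_finite_quotient _ _ _ hfq
  set H : Subgroup ↥K := ⨅ x ∈ s, cosetStab K x with hHdef
  haveI hHfin : H.FiniteIndex := by
    rw [hHdef]
    exact Subgroup.finiteIndex_iInf' (fun x => cosetStab K x) (fun x _ => fin x)
  haveI : Finite (↥K ⧸ H) := Subgroup.finite_quotient_of_finiteIndex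
  letI : Fintype (↥K ⧸ H) := Fintype.ofFinite _
  refine ⟨Fintype.card (↥K ⧸ H), Fintype.card_ne_zero, ?_⟩
  set A : V →ₗ[ℂ] V := ∑ q : ↥K ⧸ H, ((π ((q.out : ↥K) : G)) : V →ₗ[ℂ] V) with hAdef
  have hAapp : ∀ v : V, A v = ∑ q : ↥K ⧸ H, π ((q.out : ↥K) : G) v := by
    intro v
    rw [hAdef, LinearMap.sum_apply]
    rfl
  refine ⟨A, ?_, ?_, ?_⟩
  · intro U hU v hv
    rw [hAapp]
    exact Submodule.sum_mem _ fun q _ => hU _ v hv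
  · rw [hAapp]
    have : ∀ q : ↥K ⧸ H, π ((q.out : ↥K) : G) v₀ = v₀ := fun q => hfix _ (q.out).2
    rw [Finset.sum_congr rfl fun q _ => this q, Finset.sum_const, Finset.card_univ,
      Nat.cast_smul_eq_nsmul]
  · intro x hx
    have hHle : H ≤ cosetStab K x := iInf₂_le x hx
    -- descend ψ x to the quotient
    have hdes : ∀ a b : ↥K, QuotientGroup.leftRel H a b → ψ x a = ψ x b := by
      intro a b hab
      rw [QuotientGroup.leftRel_apply] at hab
      exact (ψ_eq_of x a b (hHle hab)).symm
    set ψb : ↥K ⧸ H → Fin (n x) := fun q => Quotient.liftOn' q (ψ x) hdes with hψbdef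
    have hψb_mk : ∀ k : ↥K, ψb (QuotientGroup.mk k) = ψ x k := fun k => rfl
    have hψb_out : ∀ q : ↥K ⧸ H, ψb q = ψ x q.out := by
      intro q
      conv_lhs => rw [← QuotientGroup.out_eq' q]
      exact hψb_mk _
    have step1 : ∀ q : ↥K ⧸ H, π ((q.out : ↥K) : G) (π x v₀) = π (r x (ψb q)) v₀ := by
      intro q
      rw [hψb_out]
      have h1 : π ((q.out : ↥K) : G) (π x v₀) = π (((q.out : ↥K) : G) * x) v₀ := by
        rw [map_mul]; rfl
      rw [h1]
      exact coset_eq _ _ (hψ x q.out)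
    have hψb_surj : Function.Surjective ψb := by
      intro i
      obtain ⟨k, hk⟩ := ψ_surj x i
      exact ⟨QuotientGroup.mk k, hk⟩
    -- all fibers of ψb have the same cardinality
    have card_eq : ∀ i i' : Fin (n x),
        (Finset.univ.filter fun q : ↥K ⧸ H => ψb q = i).card =
        (Finset.univ.filter fun q : ↥K ⧸ H => ψb q = i').card := by
      intro i i'
      obtain ⟨a, ha⟩ := ψ_surj x i
      obtain ⟨b, hb⟩ := ψ_surj x i'
      set u : ↥K := b * a⁻¹ with hudef
      have key : ∀ k : ↥K, (ψ x (u * k) = i' ↔ ψ x k = i) := by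
        intro k
        have h1 : ψ x k = i ↔ (k⁻¹ * a) ∈ cosetStab K x := by
          constructor
          · intro h; exact stab_of_ψ_eq x k a (h.trans ha.symm)
          · intro h; rw [← ha]; exact (ψ_eq_of x k a h).symm
        have h2 : ψ x (u * k) = i' ↔ ((u * k)⁻¹ * b) ∈ cosetStab K x := by
          constructor
          · intro h; exact stab_of_ψ_eq x (u * k) b (h.trans hb.symm)
          · intro h; rw [← hb]; exact (ψ_eq_of x (u * k) b h).symm
        have h3 : (u * k)⁻¹ * b = k⁻¹ * a := by rw [hudef]; group
        rw [h1, h2, h3]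
      have keyq : ∀ q : ↥K ⧸ H, (ψb (u • q) = i' ↔ ψb q = i) := by
        intro q
        induction q using QuotientGroup.induction_on with
        | H k =>
          rw [MulAction.Quotient.smul_mk]
          exact key k
      refine Finset.card_bij (fun q _ => u • q) ?_ ?_ ?_
      · intro q hq
        simp only [Finset.mem_filter, Finset.mem_univ, true_and] at hq ⊢
        exact (keyq q).mpr hq
      · intro q hq q' hq' he
        exact smul_left_cancel u he
      · intro q hq
        simp only [Finset.mem_filter, Finset.mem_univ, true_and] at hq ⊢
        refine ⟨u⁻¹ • q, ?_, smul_inv_smul u q⟩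
        have h4 := keyq (u⁻¹ • q)
        rw [smul_inv_smul] at h4
        exact h4.mp hq
    -- compute the sum
    have hA : A (π x v₀) = ∑ q : ↥K ⧸ H, π (r x (ψb q)) v₀ := by
      rw [hAapp]
      exact Finset.sum_congr rfl fun q _ => step1 q
    rw [hA, Finset.sum_comp (fun i => π (r x i) v₀) ψb,
      Finset.image_univ_of_surjective hψb_surj]
    set i₀ : Fin (n x) := ψ x 1 with hi₀def
    set m : ℕ := (Finset.univ.filter fun q : ↥K ⧸ H => ψb q = i₀).card with hmdef
    have hfinal : (∑ i : Fin (n x),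
        (Finset.univ.filter fun q : ↥K ⧸ H => ψb q = i).card • π (r x i) v₀)
        = ((m : ℂ) * c x) • v₀ := by
      calc (∑ i : Fin (n x), (Finset.univ.filter fun q : ↥K ⧸ H => ψb q = i).card • π (r x i) v₀)
          = ∑ i : Fin (n x), m • π (r x i) v₀ :=
            Finset.sum_congr rfl fun i _ => by rw [card_eq i i₀]
        _ = m • ∑ i : Fin (n x), π (r x i) v₀ := (Finset.smul_sum).symm
        _ = m • (c x • v₀) := by rw [hc x]
        _ = ((m : ℂ) * c x) • v₀ := by rw [← Nat.cast_smul_eq_nsmul ℂ, smul_smul]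
    have hmem := Submodule.smul_mem (Submodule.span ℂ {v₀}) ((m : ℂ) * c x)
      (Submodule.mem_span_singleton_self v₀)
    rw [← hfinal] at hmem
    exact hmem

end Aux

/-- A subspace `W` is invariant under a representation `π` of `G` if `π(g)W ⊆ W` for all
`g ∈ G`. -/
def IsInvariantSubspace {G V : Type*} [Group G] [AddCommGroup V] [Module ℂ V]
    (π : G →* (V ≃ₗ[ℂ] V)) (W : Submodule ℂ V) : Prop :=
  ∀ g : G, ∀ v ∈ W, π g v ∈ W

/-- Let `G` be a group and `K` a subgroup such that every double coset `KgK` is a finite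
disjoint union of left cosets of `K`.  Let `π` be a ℂ-linear representation of `G` on a
complex vector space `V` such that every `G`-invariant subspace has a `G`-invariant
complement.  Let `v₀ ∈ V` be a nonzero vector such that: (i) `v₀` is fixed by `K`;
(ii) the vectors `π(g)v₀` span `V`; (iii) for every `g` and every disjoint left coset
decomposition `KgK = ⊔ gᵢK`, the vector `∑ᵢ π(gᵢ)v₀` is a scalar multiple of `v₀`.
Then `π` is irreducible: the only `G`-invariant subspaces of `V` are `0` and `V`. -/
theorem stmt_3 {G V : Type*} [Group G] [AddCommGroup V] [Module ℂ V]
    (K : Subgroup G) (π : G →* (V ≃ₗ[ℂ] V))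
    (hdec : ∀ g : G, ∃ (n : ℕ) (r : Fin n → G),
      doubleCoset K g = ⋃ i, leftTranslate (r i) (K : Set G) ∧
      ∀ i j, i ≠ j →
        Disjoint (leftTranslate (r i) (K : Set G)) (leftTranslate (r j) (K : Set G)))
    (hcompl : ∀ W : Submodule ℂ V, IsInvariantSubspace π W →
      ∃ W' : Submodule ℂ V, IsInvariantSubspace π W' ∧ IsCompl W W')
    (v₀ : V) (hv₀ : v₀ ≠ 0)
    (hfix : ∀ k ∈ K, π k v₀ = v₀)
    (hspan : Submodule.span ℂ (Set.range fun g : G => π g v₀) = ⊤)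
    (heigen : ∀ (g : G) (n : ℕ) (r : Fin n → G),
      doubleCoset K g = ⋃ i, leftTranslate (r i) (K : Set G) →
      (∀ i j, i ≠ j →
        Disjoint (leftTranslate (r i) (K : Set G)) (leftTranslate (r j) (K : Set G))) →
      ∃ c : ℂ, ∑ i, π (r i) v₀ = c • v₀) :
    ∀ W : Submodule ℂ V, IsInvariantSubspace π W → W = ⊥ ∨ W = ⊤ := by
  classical
  intro W hW
  obtain ⟨W', hW', hc⟩ := hcompl W hW
  have hvsup : v₀ ∈ W ⊔ W' := by rw [hc.sup_eq_top]; exact Submodule.mem_top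
  obtain ⟨w, hw, w', hw', hww'⟩ := Submodule.mem_sup.mp hvsup
  have hwV : w ∈ Submodule.span ℂ (Set.range fun g : G => π g v₀) := by
    rw [hspan]; exact Submodule.mem_top
  obtain ⟨a, ha⟩ := Finsupp.mem_span_range_iff_exists_finsupp.mp hwV
  obtain ⟨N, hN, A, hAU, hAv₀, hAx⟩ := avg_key K π v₀ hdec hfix heigen a.support
  have hAw : A w ∈ Submodule.span ℂ {v₀} := by
    rw [← ha, Finsupp.sum, map_sum]
    refine Submodule.sum_mem _ fun g hg => ?_
    rw [map_smul]
    exact Submodule.smul_mem _ _ (hAx g hg)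
  obtain ⟨d, hd⟩ := Submodule.mem_span_singleton.mp hAw
  have hAwW : A w ∈ W := hAU W hW w hw
  have hAw'W' : A w' ∈ W' := hAU W' hW' w' hw'
  have hAw'eq : A w' = ((N : ℂ) - d) • v₀ := by
    have h2 : A w + A w' = (N : ℂ) • v₀ := by rw [← map_add, hww', hAv₀]
    rw [← hd] at h2
    have := eq_sub_of_add_eq' h2
    rw [this, ← sub_smul]
  by_cases hd0 : d = 0
  · left
    have hNd : (N : ℂ) - d ≠ 0 := by
      rw [hd0, sub_zero]
      exact_mod_cast hN
    have hv₀W' : v₀ ∈ W' := by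
      rw [hAw'eq] at hAw'W'
      have := Submodule.smul_mem W' ((N : ℂ) - d)⁻¹ hAw'W'
      rwa [inv_smul_smul₀ hNd] at this
    have hW'top : W' = ⊤ := by
      rw [eq_top_iff, ← hspan, Submodule.span_le]
      rintro _ ⟨g, rfl⟩
      exact hW' g v₀ hv₀W'
    have hdis := hc.disjoint
    rw [hW'top] at hdis
    exact disjoint_top.mp hdis
  · right
    have hv₀W : v₀ ∈ W := by
      have := Submodule.smul_mem W d⁻¹ hAwW
      rw [← hd, inv_smul_smul₀ hd0] at this
      exact this
    rw [eq_top_iff, ← hspan, Submodule.span_le]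
    rintro _ ⟨g, rfl⟩
    exact hW g v₀ hv₀W
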